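/- Let q be an odd prime power, t an even divisor of q-1 with t ≥ 2, m = (q²-1)/t, and θ a fixed element of order m in the multiplicative group of F_{q²}. Then for all integers i, j with 0 ≤ i, j ≤ (q+1)/2 + (q-1)/t - 2, the sum Σ_{ν=0}^{m-1} θ^{ν(qi + j + (q+1)/2)} equals 0 in F_{q²}. -/

import Mathlib

/-- Key integer arithmetic lemma: with `H = (q+1)/2`, `S = (q-1)/t`, `H = U*S+1`,
the exponent `(2H-1)*I + J + H` cannot be a multiple `S*(2H)*C`. -/
lemma stmt_5_key (H S U C I J : ℤ) (hH : 2 ≤ H) (hU : 1 ≤ U) (hS : 1 ≤ S)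
    (hHSU : H = U * S + 1) (hI0 : 0 ≤ I) (hJ0 : 0 ≤ J)
    (hI : I ≤ H + S - 2) (hJ : J ≤ H + S - 2)
    (hc : (2 * H - 1) * I + J + H = S * (2 * H) * C) : False := by
  have hSH : S ≤ H - 1 := by nlinarith
  have he : J - I + H = 2 * H * (S * C - I) := by linear_combination hc
  have he0 : 0 ≤ S * C - I := by nlinarith
  have he1 : S * C - I ≤ 1 := by nlinarith
  have hcases : S * C - I = 0 ∨ S * C - I = 1 := by omega
  rcases hcases with h0 | h1
  · -- I = J + H
    have hIJ : I = J + H := by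
      have := he; rw [h0] at this; linarith
    have hJS : J ≤ S - 2 := by omega
    have hcancel : (2 * H) * (J + H) = (2 * H) * (S * C) := by
      linear_combination hc - (2 * H - 1) * hIJ
    have h2H : (2 * H : ℤ) ≠ 0 := by positivity
    have hw : J + 1 = S * (C - U) := by
      have := mul_left_cancel₀ h2H hcancel
      linear_combination this - hHSU
    rcases le_or_gt (C - U) 0 with hcu | hcu
    · nlinarith
    · have : 1 ≤ C - U := hcu
      nlinarith
  · -- J = I + H
    have hJI : J = I + H := by
      have := he; rw [h1] at this; linarith
    have hIS : I ≤ S - 2 := by omega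
    have hcancel : (2 * H) * (I + 1) = (2 * H) * (S * C) := by
      linear_combination hc - hJI
    have h2H : (2 * H : ℤ) ≠ 0 := by positivity
    have hw : I + 1 = S * C := mul_left_cancel₀ h2H hcancel
    rcases le_or_gt C 0 with hcu | hcu
    · nlinarith
    · have : 1 ≤ C := hcu
      nlinarith

theorem stmt_5 (q t : ℕ) (hq : IsPrimePow q) (hqodd : Odd q) (hte : Even t)
    (ht2 : 2 ≤ t) (htdvd : t ∣ q - 1)
    (F : Type*) [Field F] [Fintype F] (hF : Fintype.card F = q ^ 2)
    (θ : F) (hθ : orderOf θ = (q ^ 2 - 1) / t)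
    (i j : ℕ) (hi : i ≤ (q + 1) / 2 + (q - 1) / t - 2)
    (hj : j ≤ (q + 1) / 2 + (q - 1) / t - 2) :
    ∑ ν ∈ Finset.range ((q ^ 2 - 1) / t), θ ^ (ν * (q * i + j + (q + 1) / 2)) = 0 := by
  obtain ⟨s, hs⟩ := htdvd
  obtain ⟨u, hu⟩ := hte
  have hq2 := hq.two_le
  have hq3 : 3 ≤ q := by
    rcases Nat.lt_or_ge q 3 with h | h
    · interval_cases q
      · exact absurd hqodd (by decide)
    · exact h
  obtain ⟨w, hw⟩ := hqodd
  set H := (q + 1) / 2 with hHdef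
  have hH2 : 2 * H = q + 1 := by omega
  have hu1 : 1 ≤ u := by omega
  have hts : q - 1 = 2 * (u * s) := by rw [hs, hu]; ring
  have hHus : H = u * s + 1 := by
    set p := u * s with hp
    omega
  have hs1 : 1 ≤ s := by
    rcases Nat.eq_zero_or_pos s with rfl | h
    · simp at hs; omega
    · exact h
  have hH : 2 ≤ H := by omega
  -- the value of m
  have hq21 : q ^ 2 - 1 = t * (s * (2 * H)) := by
    have h1 : (q - 1) * (q + 1) = q ^ 2 - 1 := by
      zify [show 1 ≤ q by omega, show 1 ≤ q ^ 2 by nlinarith]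
      ring
    calc q ^ 2 - 1 = (q - 1) * (q + 1) := h1.symm
      _ = (t * s) * (2 * H) := by rw [hs, hH2]
      _ = t * (s * (2 * H)) := by ring
  have hm : (q ^ 2 - 1) / t = s * (2 * H) := by
    rw [hq21, Nat.mul_div_cancel_left _ (by omega : 0 < t)]
  have hst : (q - 1) / t = s := by
    rw [hs, Nat.mul_div_cancel_left _ (by omega : 0 < t)]
  rw [hst] at hi hj
  -- non-divisibility
  have hndvd : ¬ (s * (2 * H) ∣ q * i + j + H) := by
    rintro ⟨c, hc⟩
    have hqZ : (q : ℤ) = 2 * (H : ℤ) - 1 := by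
      have := hH2; push_cast; omega
    have hcZ : (2 * (H : ℤ) - 1) * (i : ℤ) + (j : ℤ) + (H : ℤ)
        = (s : ℤ) * (2 * (H : ℤ)) * (c : ℤ) := by
      have := congrArg (Nat.cast : ℕ → ℤ) hc
      push_cast at this
      rw [hqZ] at this
      linarith
    refine stmt_5_key (H : ℤ) (s : ℤ) (u : ℤ) (c : ℤ) (i : ℤ) (j : ℤ)
      (by exact_mod_cast hH) (by exact_mod_cast hu1) (by exact_mod_cast hs1)
      ?_ (Int.natCast_nonneg i) (Int.natCast_nonneg j) ?_ ?_ hcZ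
    · have := hHus; push_cast; omega
    · have : i ≤ H + s - 2 := hi
      push_cast; omega
    · have : j ≤ H + s - 2 := hj
      push_cast; omega
  -- conclude via geometric sum
  set k := q * i + j + H with hk
  have hne : θ ^ k ≠ 1 := by
    intro h1
    exact hndvd (by rw [← hm, ← hθ]; exact orderOf_dvd_of_pow_eq_one h1)
  have hsum : ∑ ν ∈ Finset.range ((q ^ 2 - 1) / t), θ ^ (ν * k)
      = ∑ ν ∈ Finset.range ((q ^ 2 - 1) / t), (θ ^ k) ^ ν := by
    refine Finset.sum_congr rfl fun ν _ => ?_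
    rw [← pow_mul, mul_comm]
  rw [hsum, geom_sum_eq hne]
  have hm1 : (θ ^ k) ^ ((q ^ 2 - 1) / t) = 1 := by
    rw [← pow_mul, mul_comm, pow_mul, ← hθ, pow_orderOf_eq_one, one_pow]
  rw [hm1]
  simp
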